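/- Cholesky update under deleting a middle block: if Σ̄ = [[Σ₁₁, σ₁, Σ₁₂],[σ₁ᵀ, σ, σ₂ᵀ],[Σ₂₁, σ₂, Σ₂₂]] has Cholesky factor L̄ = [[Ā,0,0],[ā, b̄, 0],[B̄, c̄, C̄]], then the reduced matrix Σ = [[Σ₁₁, Σ₁₂],[Σ₂₁, Σ₂₂]] has Cholesky factor L = [[A,0],[B,C]] with A = Ā, B = B̄, and C Cᵀ = C̄ C̄ᵀ + c̄ c̄ᵀ. -/

import Mathlib

open Matrix OrderDual

lemma lowtri_det_isUnit {n : ℕ} (L : Matrix (Fin n) (Fin n) ℝ)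
    (h : L.BlockTriangular toDual) (d : ∀ i, 0 < L i i) : IsUnit L.det := by
  rw [det_of_lowerTriangular L h]
  exact (Finset.prod_pos (fun i _ => d i)).ne'.isUnit

lemma chol_unique {n : ℕ} (L1 L2 : Matrix (Fin n) (Fin n) ℝ)
    (h1 : L1.BlockTriangular toDual) (d1 : ∀ i, 0 < L1 i i)
    (h2 : L2.BlockTriangular toDual) (d2 : ∀ i, 0 < L2 i i)
    (h : L1 * L1ᵀ = L2 * L2ᵀ) : L1 = L2 := by
  have hu2 : IsUnit L2.det := lowtri_det_isUnit L2 h2 d2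
  have hu2t : IsUnit L2ᵀ.det := by rwa [det_transpose]
  haveI := L2.invertibleOfIsUnitDet hu2
  set M := L2⁻¹ * L1 with hMdef
  have hL1 : L1 = L2 * M := by
    rw [hMdef, Matrix.mul_nonsing_inv_cancel_left _ _ hu2]
  have hMMt : M * Mᵀ = 1 := by
    rw [hMdef, transpose_mul, transpose_nonsing_inv]
    calc L2⁻¹ * L1 * (L1ᵀ * L2ᵀ⁻¹) = L2⁻¹ * (L1 * L1ᵀ) * L2ᵀ⁻¹ := by
          simp only [Matrix.mul_assoc]
      _ = L2⁻¹ * L2 * (L2ᵀ * L2ᵀ⁻¹) := by rw [h]; simp only [Matrix.mul_assoc]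
      _ = 1 := by rw [Matrix.nonsing_inv_mul _ hu2, Matrix.mul_nonsing_inv _ hu2t, one_mul]
  haveI : Invertible M := invertibleOfRightInverse M Mᵀ hMMt
  have hMtri : M.BlockTriangular toDual :=
    (blockTriangular_inv_of_blockTriangular h2).mul h1
  have hMinv : M⁻¹ = Mᵀ := inv_eq_right_inv hMMt
  have hMtri' : Mᵀ.BlockTriangular toDual := by
    rw [← hMinv]; exact blockTriangular_inv_of_blockTriangular hMtri
  have hdiag : ∀ i j, i ≠ j → M i j = 0 := by
    intro i j hij
    rcases hij.lt_or_gt with hlt | hlt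
    · exact hMtri (show toDual j < toDual i from hlt)
    · exact hMtri' (show toDual i < toDual j from hlt)
  have hMii : ∀ i, M i i = 1 := by
    intro i
    have hsq : M i i * M i i = 1 := by
      have := congrFun (congrFun hMMt i) i
      rw [Matrix.mul_apply] at this
      rw [Finset.sum_eq_single i (fun k _ hk => by
        rw [transpose_apply, hdiag i k (Ne.symm hk), zero_mul]) (by simp)] at this
      simpa using this
    have hpos : 0 < M i i := by
      have := congrFun (congrFun hL1 i) i
      rw [Matrix.mul_apply, Finset.sum_eq_single i (fun k _ hk => by
        rw [hdiag k i hk, mul_zero]) (by simp)] at this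
      nlinarith [d1 i, d2 i]
    nlinarith
  have hM1 : M = 1 := by
    ext i j
    by_cases hij : i = j
    · subst hij; simp [hMii]
    · simp [hdiag i j hij, Matrix.one_apply_ne hij]
  rw [hL1, hM1, Matrix.mul_one]


/-- Cholesky update under deleting a middle block. If
`Σ̄ = [[Σ₁₁,σ₁,Σ₁₂],[σ₁ᵀ,σ,σ₂ᵀ],[Σ₂₁,σ₂,Σ₂₂]]` has Cholesky factor
`L̄ = [[Ā,0,0],[ā,b̄,0],[B̄,c̄,C̄]]`, then the reduced matrix `Σ = [[Σ₁₁,Σ₁₂],[Σ₂₁,Σ₂₂]]` has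
Cholesky factor `L = [[A,0],[B,C]]` with `A = Ā`, `B = B̄` and `C Cᵀ = C̄ C̄ᵀ + c̄ c̄ᵀ`. -/
theorem stmt13 (p q r : ℕ)
    (S11 : Matrix (Fin p) (Fin p) ℝ) (S12 : Matrix (Fin p) (Fin r) ℝ)
    (S21 : Matrix (Fin r) (Fin p) ℝ) (S22 : Matrix (Fin r) (Fin r) ℝ)
    (s1 : Matrix (Fin p) (Fin q) ℝ) (s0 : Matrix (Fin q) (Fin q) ℝ)
    (s2 : Matrix (Fin r) (Fin q) ℝ)
    (A Abar : Matrix (Fin p) (Fin p) ℝ) (B Bbar : Matrix (Fin r) (Fin p) ℝ)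
    (C Cbar : Matrix (Fin r) (Fin r) ℝ)
    (abar : Matrix (Fin q) (Fin p) ℝ) (bbar : Matrix (Fin q) (Fin q) ℝ)
    (cbar : Matrix (Fin r) (Fin q) ℝ)
    (hAtri : ∀ i j : Fin p, i < j → A i j = 0) (hAdiag : ∀ i : Fin p, 0 < A i i)
    (hCtri : ∀ i j : Fin r, i < j → C i j = 0) (hCdiag : ∀ i : Fin r, 0 < C i i)
    (hAbtri : ∀ i j : Fin p, i < j → Abar i j = 0) (hAbdiag : ∀ i : Fin p, 0 < Abar i i)
    (hbbtri : ∀ i j : Fin q, i < j → bbar i j = 0) (hbbdiag : ∀ i : Fin q, 0 < bbar i i)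
    (hCbtri : ∀ i j : Fin r, i < j → Cbar i j = 0) (hCbdiag : ∀ i : Fin r, 0 < Cbar i i)
    (hPD : (Matrix.fromBlocks S11 (Matrix.fromCols s1 S12)
              (Matrix.fromRows s1ᵀ S21)
              (Matrix.fromBlocks s0 s2ᵀ s2 S22)).PosDef)
    (hLbar : Matrix.fromBlocks Abar 0 (Matrix.fromRows abar Bbar)
                (Matrix.fromBlocks bbar 0 cbar Cbar) *
              (Matrix.fromBlocks Abar 0 (Matrix.fromRows abar Bbar)
                (Matrix.fromBlocks bbar 0 cbar Cbar))ᵀ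
            = Matrix.fromBlocks S11 (Matrix.fromCols s1 S12)
                (Matrix.fromRows s1ᵀ S21)
                (Matrix.fromBlocks s0 s2ᵀ s2 S22))
    (hL : Matrix.fromBlocks A 0 B C * (Matrix.fromBlocks A 0 B C)ᵀ
            = Matrix.fromBlocks S11 S12 S21 S22) :
    A = Abar ∧ B = Bbar ∧ C * Cᵀ = Cbar * Cbarᵀ + cbar * cbarᵀ := by
  -- unpack hL
  rw [fromBlocks_transpose, fromBlocks_multiply] at hL hLbar
  simp only [transpose_zero, Matrix.mul_zero, Matrix.zero_mul, add_zero, zero_add,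
    Matrix.mul_one, fromBlocks_inj] at hL
  obtain ⟨h11, h12, h21, h22⟩ := hL
  -- unpack hLbar
  rw [transpose_fromRows, fromRows_mul, fromRows_mul_fromCols, fromBlocks_transpose,
    fromBlocks_multiply] at hLbar
  simp only [transpose_zero, Matrix.mul_zero, Matrix.zero_mul, add_zero, zero_add,
    fromBlocks_add, fromBlocks_inj, fromRows_inj.eq_iff] at hLbar
  obtain ⟨hb11, hb12, ⟨hb21a, hb21b⟩, -, -, -, hb22⟩ := hLbar
  -- uniqueness for A
  have hAeq : A = Abar := chol_unique A Abar
    (fun i j h => hAtri i j (toDual_lt_toDual.mp h)) hAdiag (fun i j h => hAbtri i j (toDual_lt_toDual.mp h)) hAbdiag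
    (by rw [h11, ← hb11])
  have huA : IsUnit Aᵀ.det := by
    rw [det_transpose]
    exact lowtri_det_isUnit A (fun i j h => hAtri i j (toDual_lt_toDual.mp h)) hAdiag
  have hBeq : B = Bbar := by
    have : B * Aᵀ = Bbar * Aᵀ := by rw [h21, hAeq, hb21b]
    calc B = B * Aᵀ * Aᵀ⁻¹ := by rw [Matrix.mul_nonsing_inv_cancel_right _ _ huA]
      _ = Bbar * Aᵀ * Aᵀ⁻¹ := by rw [this]
      _ = Bbar := by rw [Matrix.mul_nonsing_inv_cancel_right _ _ huA]
  refine ⟨hAeq, hBeq, ?_⟩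
  have h22' : B * Bᵀ + C * Cᵀ = Bbar * Bbarᵀ + (cbar * cbarᵀ + Cbar * Cbarᵀ) := by
    rw [h22, ← hb22]
  rw [hBeq] at h22'
  have := add_left_cancel h22'
  rw [this, add_comm]
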